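/- Let ξ be a Reeb field and let φ = max_{1≤j≤N} (log|f_j|+λ_j)/⟨ξ,α_j⟩ ∈ H(ξ). Let (ξ_i) be a sequence of Reeb fields converging to ξ in N_ℝ, and define φ^i := max_{1≤j≤N} (log|f_j|+λ_j)/⟨ξ_i,α_j⟩ ∈ H(ξ_i), using the same data f_j, λ_j, α_j. Then φ^i converges to φ uniformly on every compact subset of X^an∖{o}. -/

import Mathlib

open Filter Topology
open scoped Classical

noncomputable section

/-- A (real) semivaluation on `R` trivial on `k`, encoded as a function `R → ℝ ∪ {+∞} ⊆ EReal`. -/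
def IsSemival (k : Type*) {R : Type*} [Field k] [CommRing R] [Algebra k R]
    (v : R → EReal) : Prop :=
  (∀ f, v f ≠ ⊥) ∧ (∀ f g, v (f * g) = v f + v g) ∧
    (∀ f g, min (v f) (v g) ≤ v (f + g)) ∧ v 0 = ⊤ ∧
    ∀ c : k, c ≠ 0 → v (algebraMap k R c) = 0

/-- The pairing `⟨ξ, α⟩` between `ξ ∈ N_ℝ` and a weight `α ∈ M`. -/
def pairing {r : ℕ} (ξ : Fin r → ℝ) (α : Fin r → ℤ) : ℝ := ∑ i, ξ i * (α i : ℝ)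

variable {k : Type*} [Field k] [IsAlgClosed k] [CharZero k]
variable {R : Type*} [CommRing R] [IsDomain R] [IsIntegrallyClosed R] [Algebra k R]
  [Algebra.FiniteType k R]
variable {r : ℕ} (𝒜 : (Fin r → ℤ) → Submodule k R) [GradedAlgebra 𝒜]

/-- `ξ` is a Reeb field: `⟨ξ,α⟩ > 0` for all `α ∈ Λ ∖ {0}`. -/
def IsReeb (ξ : Fin r → ℝ) : Prop :=
  ∀ α : Fin r → ℤ, α ≠ 0 → 𝒜 α ≠ ⊥ → 0 < pairing ξ α

/-- The maximal ideal `𝔪` of the cone point. -/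
def mIdeal : Ideal R := Ideal.span {f : R | ∃ α, α ≠ 0 ∧ f ∈ 𝒜 α}

/-- The semivaluation of the cone point `o`: `+∞` on `𝔪`, `0` elsewhere. -/
def oFun : R → EReal := fun f => if f ∈ mIdeal 𝒜 then (⊤ : EReal) else 0

/-- The punctured Berkovich cone `X^an ∖ {o}`. -/
def XanP : Set (R → EReal) := {v | IsSemival k v ∧ v ≠ oFun 𝒜}

/-- The term `(log|f| + λ)/⟨ξ,α⟩` evaluated at `v`; recall `log|f|(v) = -v(f)`. -/
def fsTerm (ξ : Fin r → ℝ) (α : Fin r → ℤ) (f : R) (lam : ℝ) (v : R → EReal) : EReal :=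
  (((pairing ξ α)⁻¹ : ℝ) : EReal) * (-(v f) + (lam : EReal))

/-- Fubini–Study functions with polarization `ξ`. -/
def IsFS (ξ : Fin r → ℝ) (φ : XanP 𝒜 → ℝ) : Prop :=
  ∃ (N : ℕ) (f : Fin N → R) (α : Fin N → Fin r → ℤ) (lam : Fin N → ℝ),
    (∀ j, α j ≠ 0 ∧ f j ∈ 𝒜 (α j) ∧ f j ≠ 0) ∧
    (Ideal.span (Set.range f)).radical = mIdeal 𝒜 ∧
    ∀ v : XanP 𝒜, (φ v : EReal) = ⨆ j, fsTerm ξ (α j) (f j) (lam j) v.1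

/-- Continuous `ξ`-psh functions: the closure of `H(ξ)` in `C⁰(X^an∖{o})` with the
topology of uniform convergence on compact subsets (compact-open topology). -/
def cpsh (ξ : Fin r → ℝ) : Set C(↥(XanP 𝒜), ℝ) := closure {φ | IsFS 𝒜 ξ ⇑φ}

/-- `ξ`-psh functions: pointwise limits of decreasing nets of continuous `ξ`-psh
functions, not identically `-∞`, with values in `ℝ ∪ {-∞}`. -/
def IsPsh (ξ : Fin r → ℝ) (φ : XanP 𝒜 → EReal) : Prop :=
  (∀ v, φ v ≠ ⊤) ∧ (∃ v, φ v ≠ ⊥) ∧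
  ∃ (ι : Type) (le : ι → ι → Prop),
    Nonempty ι ∧ (∀ i j : ι, ∃ l, le i l ∧ le j l) ∧
    ∃ φi : ι → C(↥(XanP 𝒜), ℝ),
      (∀ i, φi i ∈ cpsh 𝒜 ξ) ∧
      (∀ i j, le i j → ∀ v, φi j v ≤ φi i v) ∧
      ∀ v, (⨅ i, ((φi i v : ℝ) : EReal)) = φ v

/-- The NA link `X₀ = {v : v(𝔪) = 0}`, as a subset of the punctured cone. -/
def linkSet : Set (↥(XanP 𝒜)) :=
  {v | (∀ f ∈ mIdeal 𝒜, f ≠ 0 → 0 ≤ v.1 f) ∧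
    sInf {x : EReal | ∃ f ∈ mIdeal 𝒜, f ≠ 0 ∧ x = v.1 f} = 0}

/-- `T(v;ξ) = sup { v(f)/⟨ξ,α⟩ : α ∈ Λ∖{0}, f ∈ R_α ∖ {0} }`. -/
def Tfun (v : R → EReal) (ξ : Fin r → ℝ) : EReal :=
  sSup {x : EReal | ∃ (α : Fin r → ℤ) (f : R), α ≠ 0 ∧ f ∈ 𝒜 α ∧ f ≠ 0 ∧
    x = (((pairing ξ α)⁻¹ : ℝ) : EReal) * v f}

end


lemma ereal_iSup_attained {N : ℕ} (hN : N ≠ 0) (t : Fin N → EReal) :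
    ∃ j, (⨆ l, t l) = t j := by
  have : Nonempty (Fin N) := ⟨⟨0, Nat.pos_of_ne_zero hN⟩⟩
  obtain ⟨j, hj⟩ := Finite.exists_max t
  exact ⟨j, le_antisymm (iSup_le hj) (le_iSup t j)⟩

lemma ereal_cont_iInf {X : Type*} [TopologicalSpace X] :
    ∀ (n : ℕ) (g : Fin (n + 1) → X → EReal), (∀ j, Continuous (g j)) →
      Continuous fun x => ⨅ j, g j x := by
  intro n
  induction n with
  | zero =>
    intro g hg
    have : (fun x => ⨅ j, g j x) = g 0 := by
      funext x
      refine le_antisymm (iInf_le _ 0) (le_iInf fun j => ?_)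
      have : j = 0 := Fin.fin_one_eq_zero j
      rw [this]
    rw [this]; exact hg 0
  | succ n ih =>
    intro g hg
    have key : ∀ x, (⨅ j, g j x) = min (g 0 x) (⨅ j : Fin (n + 1), g j.succ x) := by
      intro x
      apply le_antisymm
      · exact le_min (iInf_le _ 0) (le_iInf fun j => iInf_le _ j.succ)
      · refine le_iInf fun j => ?_
        induction j using Fin.cases with
        | zero => exact min_le_left _ _
        | succ j => exact (min_le_right _ _).trans (iInf_le _ j)
    simp only [key]
    exact (hg 0).min (ih _ fun j => hg j.succ)

lemma key_est {N : ℕ} (t t' : Fin N → EReal) (ρ : Fin N → ℝ)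
    (hρpos : ∀ j, 0 < ρ j) (ht' : ∀ j, t' j = ((ρ j : ℝ) : EReal) * t j)
    {ε M : ℝ} (hM : 0 < M) (hε : 0 < ε) (hε2 : ε ≤ 1 / 2)
    (hρε : ∀ j, |ρ j - 1| ≤ ε)
    {a a' : ℝ} (ha : (a : EReal) = ⨆ j, t j) (ha' : (a' : EReal) = ⨆ j, t' j)
    (haM : |a| ≤ M) : |a' - a| ≤ 4 * ε * M := by
  have hN : N ≠ 0 := by
    rintro rfl
    rw [iSup_of_empty] at ha
    exact EReal.coe_ne_bot a ha
  obtain ⟨j0, hj0⟩ := ereal_iSup_attained hN t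
  obtain ⟨j1, hj1⟩ := ereal_iSup_attained hN t'
  rw [← ha] at hj0
  rw [← ha'] at hj1
  -- step: ρ j0 * a ≤ a'
  have h1 : ρ j0 * a ≤ a' := by
    have : ((ρ j0 * a : ℝ) : EReal) ≤ (a' : EReal) := by
      rw [EReal.coe_mul, ha', hj0]
      exact le_iSup_of_le j0 (le_of_eq (ht' j0).symm)
    exact EReal.coe_le_coe_iff.1 this
  -- step: t j1 is a real number s with a' = ρ j1 * s and s ≤ a
  have htj1 : t' j1 = ((ρ j1 : ℝ) : EReal) * t j1 := ht' j1
  have hne_top : t j1 ≠ ⊤ := by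
    intro h
    rw [h, EReal.coe_mul_top_of_pos (hρpos j1), ← hj1] at htj1
    exact EReal.coe_ne_top a' htj1
  have hne_bot : t j1 ≠ ⊥ := by
    intro h
    rw [h, EReal.coe_mul_bot_of_pos (hρpos j1), ← hj1] at htj1
    exact EReal.coe_ne_bot a' htj1
  set s : ℝ := (t j1).toReal with hs
  have hts : t j1 = (s : EReal) := (EReal.coe_toReal hne_top hne_bot).symm
  have h3 : a' = ρ j1 * s := by
    have : (a' : EReal) = ((ρ j1 * s : ℝ) : EReal) := by
      rw [hj1, htj1, hts, EReal.coe_mul]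
    exact EReal.coe_eq_coe_iff.1 this
  have h2 : s ≤ a := by
    have : (s : EReal) ≤ (a : EReal) := by rw [← hts, ha]; exact le_iSup t j1
    exact EReal.coe_le_coe_iff.1 this
  -- real arithmetic
  have hb0 := abs_le.1 (hρε j0)
  have hb1 := abs_le.1 (hρε j1)
  have haM' := abs_le.1 haM
  rw [abs_le]
  constructor
  · -- -(4εM) ≤ a' - a, using a' ≥ ρ j0 * a
    nlinarith [mul_le_mul_of_nonneg_right hb0.1 (le_of_lt hM),
      mul_le_mul_of_nonneg_right hb0.2 (le_of_lt hM)]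
  · -- a' - a ≤ 4εM
    -- first s ≥ -3M
    have hsl : -3 * M ≤ s := by
      rcases le_or_gt 0 s with h | h
      · nlinarith
      · -- ρ j1 * s ≥ ρ j0 * a ≥ -(3/2) M and ρ j1 ≥ 1/2
        nlinarith [mul_le_mul_of_nonneg_left h2 (hρpos j1).le, hρpos j1, hρpos j0]
    have hsu : s ≤ M := le_trans h2 haM'.2
    -- a' - a ≤ a' - s = (ρ j1 - 1) s ≤ ε * 3M
    nlinarith [hρpos j1]

section Statements

variable {k : Type*} [Field k] [IsAlgClosed k] [CharZero k]
variable {R : Type*} [CommRing R] [IsDomain R] [IsIntegrallyClosed R] [Algebra k R]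
  [Algebra.FiniteType k R]
variable {r : ℕ} (𝒜 : (Fin r → ℤ) → Submodule k R) [GradedAlgebra 𝒜]

theorem statement1 (h0 : 𝒜 0 = Submodule.span k {(1 : R)}) (ξ : Fin r → ℝ)
    (hξ : IsReeb 𝒜 ξ)
    -- the data defining `φ ∈ H(ξ)`
    (N : ℕ) (f : Fin N → R) (α : Fin N → Fin r → ℤ) (lam : Fin N → ℝ)
    (hdata : ∀ j, α j ≠ 0 ∧ f j ∈ 𝒜 (α j) ∧ f j ≠ 0)
    (hprim : (Ideal.span (Set.range f)).radical = mIdeal 𝒜)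
    (φ : ↥(XanP 𝒜) → ℝ)
    (hφ : ∀ v : ↥(XanP 𝒜), (φ v : EReal) = ⨆ j, fsTerm ξ (α j) (f j) (lam j) v.1)
    -- a sequence of Reeb fields `ξᵢ → ξ`
    (ξi : ℕ → Fin r → ℝ) (hξi : ∀ i, IsReeb 𝒜 (ξi i))
    (hconv : Filter.Tendsto ξi Filter.atTop (nhds ξ))
    -- `φⁱ ∈ H(ξᵢ)`, defined by the same data with `ξ` replaced by `ξᵢ`
    (φi : ℕ → ↥(XanP 𝒜) → ℝ)
    (hφi : ∀ i (v : ↥(XanP 𝒜)),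
      (φi i v : EReal) = ⨆ j, fsTerm (ξi i) (α j) (f j) (lam j) v.1) :
    ∀ K : Set (↥(XanP 𝒜)), IsCompact K →
      TendstoUniformlyOn (fun i => φi i) φ Filter.atTop K := by
  intro K hK
  rcases K.eq_empty_or_nonempty with rfl | ⟨v₀, hv₀⟩
  · exact tendstoUniformlyOn_empty
  have hN : N ≠ 0 := by
    rintro rfl
    have h := hφ v₀
    rw [iSup_of_empty] at h
    exact EReal.coe_ne_bot _ h
  have hNE : Nonempty (Fin N) := ⟨⟨0, Nat.pos_of_ne_zero hN⟩⟩
  have hAne : ∀ j, (𝒜 (α j) : Submodule k R) ≠ ⊥ := by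
    intro j h
    exact (hdata j).2.2 (by simpa [h] using (hdata j).2.1)
  have hc : ∀ j, 0 < pairing ξ (α j) := fun j => hξ (α j) (hdata j).1 (hAne j)
  have hci : ∀ i j, 0 < pairing (ξi i) (α j) := fun i j => hξi i (α j) (hdata j).1 (hAne j)
  have hgcont : ∀ g : R, Continuous fun v : ↥(XanP 𝒜) => v.1 g :=
    fun g => (continuous_apply g).comp continuous_subtype_val
  have hnb : ∀ (v : ↥(XanP 𝒜)) (g : R), v.1 g ≠ ⊥ := fun v g => v.2.1.1 g
  have hterm_top : ∀ (ξ' : Fin r → ℝ) (j : Fin N) (v : R → EReal), 0 < pairing ξ' (α j) →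
      v (f j) = ⊤ → fsTerm ξ' (α j) (f j) (lam j) v = ⊥ := by
    intro ξ' j v hp hv
    simp only [fsTerm, hv, EReal.neg_top, EReal.bot_add,
      EReal.coe_mul_bot_of_pos (inv_pos.2 hp)]
  have hterm_coe : ∀ (ξ' : Fin r → ℝ) (j : Fin N) (v : R → EReal) (x : ℝ),
      v (f j) = (x : EReal) →
      fsTerm ξ' (α j) (f j) (lam j) v
        = (((pairing ξ' (α j))⁻¹ * (lam j - x) : ℝ) : EReal) := by
    intro ξ' j v x hv
    simp only [fsTerm, hv]
    rw [← EReal.coe_neg, ← EReal.coe_add, ← EReal.coe_mul]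
    exact EReal.coe_eq_coe_iff.2 (by ring)
  have hmj : ∀ j, ∃ mj : ℝ, ∀ v ∈ K, v.1 (f j) = ⊤ ∨ (mj : EReal) ≤ v.1 (f j) := by
    intro j
    obtain ⟨w, hwK, hw⟩ := hK.exists_isMinOn ⟨v₀, hv₀⟩ (hgcont (f j)).continuousOn
    refine ⟨(w.1 (f j)).toReal, fun v hv => ?_⟩
    rcases eq_or_ne (w.1 (f j)) ⊤ with h | h
    · exact Or.inl (top_le_iff.1 (h ▸ isMinOn_iff.1 hw v hv))
    · exact Or.inr (le_trans (le_of_eq (EReal.coe_toReal h (hnb w _))) (isMinOn_iff.1 hw v hv))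
  choose m hm using hmj
  -- upper bound for φ on K
  obtain ⟨jmax, hjmax⟩ := Finite.exists_max fun j => (pairing ξ (α j))⁻¹ * (lam j - m j)
  set Mp : ℝ := (pairing ξ (α jmax))⁻¹ * (lam jmax - m jmax) with hMpdef
  have hupper : ∀ v ∈ K, φ v ≤ Mp := by
    intro v hv
    rw [← EReal.coe_le_coe_iff, hφ v]
    refine iSup_le fun j => ?_
    rcases eq_or_ne (v.1 (f j)) ⊤ with h | h
    · rw [hterm_top ξ j v.1 (hc j) h]; exact bot_le
    · obtain hx := EReal.coe_toReal h (hnb v _)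
      set x := (v.1 (f j)).toReal with hxdef
      have hmx : m j ≤ x := by
        rcases hm j v hv with h' | h'
        · exact absurd h' h
        · exact EReal.coe_le_coe_iff.1 (by rw [hx]; exact h')
      rw [hterm_coe ξ j v.1 x hx.symm]
      refine EReal.coe_le_coe_iff.2 (le_trans ?_ (hjmax j))
      nlinarith [inv_pos.2 (hc j)]
  -- lower bound for φ on K
  obtain ⟨n, rfl⟩ : ∃ n, N = n + 1 :=
    ⟨N - 1, (Nat.succ_pred_eq_of_pos (Nat.pos_of_ne_zero hN)).symm⟩
  have hHcont : Continuous fun v : ↥(XanP 𝒜) => ⨅ j, v.1 (f j) :=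
    ereal_cont_iInf n (fun j (v : ↥(XanP 𝒜)) => v.1 (f j)) fun j => hgcont (f j)
  obtain ⟨w, hwK, hw⟩ := hK.exists_isMaxOn ⟨v₀, hv₀⟩ hHcont.continuousOn
  have hUne : (⨅ j, w.1 (f j)) ≠ ⊤ := by
    intro h
    have hall : ∀ j, w.1 (f j) = ⊤ := iInf_eq_top.1 h
    have h2 := hφ w
    have h3 : (⨆ j, fsTerm ξ (α j) (f j) (lam j) w.1) = (⊥ : EReal) := by
      refine le_bot_iff.1 (iSup_le fun j => ?_)
      rw [hterm_top ξ j w.1 (hc j) (hall j)]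
    rw [h3] at h2
    exact EReal.coe_ne_bot _ h2
  set L : ℝ := (⨅ j, w.1 (f j)).toReal with hLdef
  have hLbd : ∀ v ∈ K, ∃ j, v.1 (f j) ≤ (L : EReal) := by
    intro v hv
    obtain ⟨j, hj⟩ := Finite.exists_min fun j => v.1 (f j)
    exact ⟨j, le_trans (le_iInf hj)
      (le_trans (isMaxOn_iff.1 hw v hv) (EReal.le_coe_toReal hUne))⟩
  obtain ⟨jmin, hjmin⟩ := Finite.exists_min fun j => (pairing ξ (α j))⁻¹ * (lam j - L)
  set Mm : ℝ := (pairing ξ (α jmin))⁻¹ * (lam jmin - L) with hMmdef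
  have hlower : ∀ v ∈ K, Mm ≤ φ v := by
    intro v hv
    obtain ⟨j, hj⟩ := hLbd v hv
    have hne : v.1 (f j) ≠ ⊤ := fun h => EReal.coe_ne_top L (top_le_iff.1 (h ▸ hj))
    obtain hx := EReal.coe_toReal hne (hnb v _)
    set x := (v.1 (f j)).toReal with hxdef
    have hxL : x ≤ L := EReal.coe_le_coe_iff.1 (by rw [hx]; exact hj)
    rw [← EReal.coe_le_coe_iff, hφ v]
    refine le_trans ?_ (le_iSup _ j)
    rw [hterm_coe ξ j v.1 x hx.symm]
    refine EReal.coe_le_coe_iff.2 (le_trans (hjmin j) ?_)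
    nlinarith [inv_pos.2 (hc j)]
  set M : ℝ := max |Mp| |Mm| + 1 with hMdef
  have hMpos : 0 < M := by positivity
  have habs : ∀ v ∈ K, |φ v| ≤ M := by
    intro v hv
    rw [abs_le]
    have h1 := hupper v hv
    have h2 := hlower v hv
    constructor
    · have h3 := neg_abs_le Mm
      have h4 := le_max_right |Mp| |Mm|
      simp only [hMdef]; linarith
    · have h3 := le_abs_self Mp
      have h4 := le_max_left |Mp| |Mm|
      simp only [hMdef]; linarith
  -- convergence
  rw [Metric.tendstoUniformlyOn_iff]
  intro ε hε
  set ε' : ℝ := min (1 / 2) (ε / (5 * M)) with hε'def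
  have hε'pos : 0 < ε' := lt_min (by norm_num) (div_pos hε (by positivity))
  have hε'half : ε' ≤ 1 / 2 := min_le_left _ _
  set ρ : ℕ → Fin (n + 1) → ℝ := fun i j => (pairing (ξi i) (α j))⁻¹ * pairing ξ (α j)
    with hρdef
  have hρpos : ∀ i j, 0 < ρ i j := fun i j => mul_pos (inv_pos.2 (hci i j)) (hc j)
  have htend : ∀ j, Filter.Tendsto (fun i => ρ i j) Filter.atTop (nhds 1) := by
    intro j
    have hpt : Filter.Tendsto (fun i => pairing (ξi i) (α j)) Filter.atTop
        (nhds (pairing ξ (α j))) := by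
      simp only [pairing]
      exact tendsto_finset_sum _ fun s _ => (tendsto_pi_nhds.1 hconv s).mul_const _
    have h2 := (hpt.inv₀ (hc j).ne').mul_const (pairing ξ (α j))
    rwa [inv_mul_cancel₀ (hc j).ne'] at h2
  have hev : ∀ᶠ i in Filter.atTop, ∀ j, |ρ i j - 1| ≤ ε' := by
    rw [eventually_all]
    intro j
    filter_upwards [(htend j) (Metric.closedBall_mem_nhds (1 : ℝ) hε'pos)] with i hi
    simpa [Real.dist_eq] using Metric.mem_closedBall.1 hi
  filter_upwards [hev] with i hi v hv
  have ht' : ∀ j, fsTerm (ξi i) (α j) (f j) (lam j) v.1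
      = ((ρ i j : ℝ) : EReal) * fsTerm ξ (α j) (f j) (lam j) v.1 := by
    intro j
    simp only [fsTerm]
    rw [← mul_assoc, ← EReal.coe_mul]
    have hcoe : ρ i j * (pairing ξ (α j))⁻¹ = (pairing (ξi i) (α j))⁻¹ := by
      simp only [hρdef]
      rw [mul_assoc, mul_inv_cancel₀ (hc j).ne', mul_one]
    rw [hcoe]
  have happ := key_est (fun j => fsTerm ξ (α j) (f j) (lam j) v.1)
      (fun j => fsTerm (ξi i) (α j) (f j) (lam j) v.1) (ρ i)
      (hρpos i) ht' hMpos hε'pos hε'half hi (hφ v) (hφi i v) (habs v hv)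
  rw [Real.dist_eq]
  have h4 : 4 * ε' * M < ε := by
    have h5 : ε' ≤ ε / (5 * M) := min_le_right _ _
    have h6 : 4 * ε' * M ≤ 4 * (ε / (5 * M)) * M := by nlinarith
    have heq : 4 * (ε / (5 * M)) * M = 4 / 5 * ε := by field_simp
    rw [heq] at h6
    clear_value ε' M
    linarith
  calc |φ v - φi i v| = |φi i v - φ v| := abs_sub_comm _ _
    _ ≤ 4 * ε' * M := happ
    _ < ε := h4


end Statements
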